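/- Let p be a prime and g(x) ∈ 𝔽_p[x] a nonzero polynomial of degree strictly less than p. For any nonzero element a ∈ 𝔽_p, the multiplicity of a as a root of g is strictly less than the number of nonzero coefficients of g. -/
import Mathlib

open Polynomial

private lemma deriv_support (p : ℕ) (hp : p.Prime) (g : Polynomial (ZMod p))
    (hdeg : g.natDegree < p) :
    (Polynomial.derivative g).support = (g.support.erase 0).image (· - 1) := by
  haveI : Fact p.Prime := ⟨hp⟩
  ext n
  simp only [Finset.mem_image, Finset.mem_erase, Polynomial.mem_support_iff,
    Polynomial.coeff_derivative]
  constructor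
  · intro h
    refine ⟨n + 1, ⟨Nat.succ_ne_zero n, ?_⟩, rfl⟩
    intro hc; exact h (by simp [hc])
  · rintro ⟨m, ⟨hm0, hm⟩, rfl⟩
    obtain ⟨k, rfl⟩ := Nat.exists_eq_succ_of_ne_zero hm0
    have hklt : k + 1 < p := lt_of_le_of_lt (Polynomial.le_natDegree_of_ne_zero hm) hdeg
    have : ((k : ZMod p) + 1) ≠ 0 := by
      have : ((k + 1 : ℕ) : ZMod p) ≠ 0 := by
        rw [Ne, ZMod.natCast_eq_zero_iff]
        exact fun hdvd => absurd (Nat.le_of_dvd (Nat.succ_pos k) hdvd) (not_le.2 hklt)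
      simpa using this
    simpa using mul_ne_zero hm this

theorem mult_lt_support (p : ℕ) (hp : p.Prime) (g : Polynomial (ZMod p))
    (hg : g ≠ 0) (hdeg : g.natDegree < p) (a : ZMod p) (ha : a ≠ 0) :
    g.rootMultiplicity a < g.support.card := by
  haveI : Fact p.Prime := ⟨hp⟩
  suffices key : ∀ n : ℕ, ∀ g : Polynomial (ZMod p), g ≠ 0 → g.natDegree < p →
      g.natDegree = n → g.rootMultiplicity a < g.support.card from key _ g hg hdeg rfl
  clear hg hdeg g
  intro n
  induction n using Nat.strong_induction_on with
  | _ n ih =>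
  intro g hg hdeg hn
  by_cases hroot : g.IsRoot a
  · -- multiplicity ≥ 1
    by_cases h0 : g.coeff 0 = 0
    · -- g = X * h
      obtain ⟨h, rfl⟩ := Polynomial.X_dvd_iff.mpr h0
      have hh : h ≠ 0 := fun hh => hg (by simp [hh])
      have hXh : (X : Polynomial (ZMod p)) * h ≠ 0 := hg
      have hdX : (X * h).natDegree = h.natDegree + 1 := by
        rw [Polynomial.natDegree_mul Polynomial.X_ne_zero hh, Polynomial.natDegree_X]
        ring
      have hmul : (X * h).rootMultiplicity a = h.rootMultiplicity a := by
        rw [Polynomial.rootMultiplicity_mul hXh,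
          Polynomial.rootMultiplicity_eq_zero (by simpa [Polynomial.IsRoot] using ha)]
        ring
      have hsupp : (X * h).support = h.support.image (· + 1) := by
        ext n
        simp only [Finset.mem_image, Polynomial.mem_support_iff]
        constructor
        · intro hc
          cases n with
          | zero => exact absurd (Polynomial.coeff_X_mul_zero h) hc
          | succ k => exact ⟨k, by rwa [Polynomial.coeff_X_mul] at hc, rfl⟩
        · rintro ⟨m, hm, rfl⟩
          rwa [Polynomial.coeff_X_mul]
      have hcard : (X * h).support.card = h.support.card := by
        rw [hsupp]
        exact Finset.card_image_of_injective _ (add_left_injective 1)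
      rw [hmul, hcard]
      exact ih h.natDegree (by omega) h hh (by omega) rfl
    · -- derivative step
      have hd' : (Polynomial.derivative g).support = (g.support.erase 0).image (· - 1) :=
        deriv_support p hp g hdeg
      have h0mem : 0 ∈ g.support := Polynomial.mem_support_iff.mpr h0
      have hcard : (Polynomial.derivative g).support.card = g.support.card - 1 := by
        rw [hd', Finset.card_image_of_injOn, Finset.card_erase_of_mem h0mem]
        intro x hx y hy hxy
        simp only [Finset.mem_coe, Finset.mem_erase] at hx hy
        simp only at hxy
        omega
      have hnd0 : g.natDegree ≠ 0 := by
        intro hdeg0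
        rw [Polynomial.eq_C_of_natDegree_eq_zero hdeg0] at hroot h0
        simp [Polynomial.IsRoot] at hroot
        exact h0 (by simp [hroot])
      have hg' : Polynomial.derivative g ≠ 0 := by
        intro hzero
        have h1 : g.natDegree ∈ g.support.erase 0 :=
          Finset.mem_erase.mpr ⟨hnd0, Polynomial.natDegree_mem_support_of_nonzero hg⟩
        have h2 : g.natDegree - 1 ∈ (Polynomial.derivative g).support := by
          rw [hd']; exact Finset.mem_image_of_mem _ h1
        rw [hzero] at h2
        simp at h2
      have hlt : (Polynomial.derivative g).natDegree < g.natDegree :=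
        Polynomial.natDegree_derivative_lt hnd0
      have hih := ih (Polynomial.derivative g).natDegree (by omega) (Polynomial.derivative g) hg' (by omega) rfl
      have hsub := Polynomial.rootMultiplicity_sub_one_le_derivative_rootMultiplicity_of_ne_zero
        g a hg'
      have hpos : 0 < g.rootMultiplicity a := (Polynomial.rootMultiplicity_pos hg).2 hroot
      have hge1 : 1 ≤ g.support.card := Finset.card_pos.mpr ⟨0, h0mem⟩
      omega
  · rw [Polynomial.rootMultiplicity_eq_zero hroot]
    exact Finset.card_pos.mpr ⟨g.natDegree, Polynomial.natDegree_mem_support_of_nonzero hg⟩
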